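/- For vertices i ≠ j and weight w_{ij} > 0, the base polytope of the submodular function F_{ij} (where F_{ij}(S) = -w_{ij} if i,j ∈ S and 0 otherwise) equals the set -w_{ij}·conv(e_i, e_j), the scaled convex hull of the two canonical basis vectors; equivalently, B_{F_{ij}} = {g ∈ ℝ^n : g_i ≤ 0, g_j ≤ 0, g_i + g_j = -w_{ij}, g_k = 0 for k ≠ i,j}. -/

import Mathlib

theorem base_polytope_of_edge_function (n : ℕ) (i j : Fin n) (hij : i ≠ j)
    (w : ℝ) (hw : 0 < w) (F : Finset (Fin n) → ℝ)
    (hF : ∀ S : Finset (Fin n), F S = if i ∈ S ∧ j ∈ S then -w else 0) :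
    {g : Fin n → ℝ | (∑ k, g k) = F Finset.univ ∧
        ∀ S : Finset (Fin n), (∑ k ∈ S, g k) ≤ F S} =
      {g : Fin n → ℝ | g i ≤ 0 ∧ g j ≤ 0 ∧ g i + g j = -w ∧
        ∀ k, k ≠ i → k ≠ j → g k = 0} ∧
    {g : Fin n → ℝ | (∑ k, g k) = F Finset.univ ∧
        ∀ S : Finset (Fin n), (∑ k ∈ S, g k) ≤ F S} =
      (fun g => (-w) • g) '' convexHull ℝ
        {Pi.single i (1 : ℝ), Pi.single j (1 : ℝ)} := by
  have hFuniv : F Finset.univ = -w := by simp [hF]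
  have hB : {g : Fin n → ℝ | (∑ k, g k) = F Finset.univ ∧
        ∀ S : Finset (Fin n), (∑ k ∈ S, g k) ≤ F S} =
      {g : Fin n → ℝ | g i ≤ 0 ∧ g j ≤ 0 ∧ g i + g j = -w ∧
        ∀ k, k ≠ i → k ≠ j → g k = 0} := by
    ext g
    simp only [Set.mem_setOf_eq]
    constructor
    · rintro ⟨hsum, hS⟩
      have hi : g i ≤ 0 := by
        have := hS {i}
        simpa [hF, hij.symm] using this
      have hj : g j ≤ 0 := by
        have := hS {j}
        simpa [hF, hij] using this
      have hzero : ∀ k, k ≠ i → k ≠ j → g k = 0 := by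
        intro k hki hkj
        have h1 : g k ≤ 0 := by
          have := hS {k}
          simpa [hF, hki.symm] using this
        have h2 : (∑ m ∈ Finset.univ.erase k, g m) ≤ -w := by
          have := hS (Finset.univ.erase k)
          simpa [hF, Finset.mem_erase, hki.symm, hkj.symm] using this
        have h3 : g k + (∑ m ∈ Finset.univ.erase k, g m) = -w := by
          rw [Finset.add_sum_erase _ _ (Finset.mem_univ k), hsum, hFuniv]
        linarith
      refine ⟨hi, hj, ?_, hzero⟩
      have hsplit : (∑ k, g k) = ∑ k ∈ ({i, j} : Finset (Fin n)), g k := by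
        refine (Finset.sum_subset (Finset.subset_univ _) ?_).symm
        intro x _ hx
        simp only [Finset.mem_insert, Finset.mem_singleton, not_or] at hx
        exact hzero x hx.1 hx.2
      rw [hsplit, Finset.sum_pair hij] at hsum
      rw [hsum, hFuniv]
    · rintro ⟨hi, hj, hsum, hzero⟩
      have key : ∀ S : Finset (Fin n), (∑ k ∈ S, g k) = ∑ k ∈ S ∩ {i, j}, g k := by
        intro S
        refine (Finset.sum_subset Finset.inter_subset_left ?_).symm
        intro x hxS hx
        simp only [Finset.mem_inter, Finset.mem_insert, Finset.mem_singleton, not_and_or,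
          not_or] at hx
        rcases hx with h | h
        · exact absurd hxS h
        · exact hzero x h.1 h.2
      constructor
      · rw [key, hFuniv]
        have : Finset.univ ∩ ({i, j} : Finset (Fin n)) = {i, j} := by
          simp
        rw [this, Finset.sum_pair hij, hsum]
      · intro S
        rw [key, hF]
        by_cases hmem : i ∈ S ∧ j ∈ S
        · have : S ∩ ({i, j} : Finset (Fin n)) = {i, j} := by
            ext x
            simp only [Finset.mem_inter, Finset.mem_insert, Finset.mem_singleton]
            constructor
            · tauto
            · rintro (rfl | rfl) <;> simp [hmem.1, hmem.2]
          rw [this, Finset.sum_pair hij, hsum]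
          simp [hmem]
        · simp only [hmem, if_false]
          refine Finset.sum_nonpos ?_
          intro x hx
          simp only [Finset.mem_inter, Finset.mem_insert, Finset.mem_singleton] at hx
          rcases hx.2 with rfl | rfl
          · exact hi
          · exact hj
  refine ⟨hB, ?_⟩
  rw [hB, convexHull_pair]
  have hw' : w ≠ 0 := hw.ne'
  ext g
  simp only [Set.mem_setOf_eq, Set.mem_image]
  constructor
  · rintro ⟨hi, hj, hsum, hzero⟩
    refine ⟨(-g i / w) • (Pi.single i (1:ℝ) : Fin n → ℝ)
        + (-g j / w) • (Pi.single j (1:ℝ) : Fin n → ℝ),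
      ⟨-g i / w, -g j / w, div_nonneg (by linarith) hw.le,
        div_nonneg (by linarith) hw.le, ?_, rfl⟩, ?_⟩
    · rw [← add_div, show -g i + -g j = w by linarith]
      exact div_self hw'
    · funext k
      simp only [Pi.smul_apply, Pi.add_apply, smul_eq_mul]
      by_cases hki : k = i
      · subst hki
        rw [Pi.single_eq_same, Pi.single_eq_of_ne hij]
        field_simp
        ring
      · by_cases hkj : k = j
        · subst hkj
          rw [Pi.single_eq_same, Pi.single_eq_of_ne hij.symm]
          field_simp
          ring
        · rw [Pi.single_eq_of_ne hki, Pi.single_eq_of_ne hkj, hzero k hki hkj]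
          ring
  · rintro ⟨p, ⟨a, b, ha, hb, hab, rfl⟩, rfl⟩
    refine ⟨?_, ?_, ?_, ?_⟩
    · simp only [Pi.smul_apply, Pi.add_apply, smul_eq_mul, Pi.single_eq_same,
        Pi.single_eq_of_ne hij, mul_one, mul_zero, add_zero]
      nlinarith
    · simp only [Pi.smul_apply, Pi.add_apply, smul_eq_mul, Pi.single_eq_same,
        Pi.single_eq_of_ne hij.symm, mul_one, mul_zero, zero_add]
      nlinarith
    · simp only [Pi.smul_apply, Pi.add_apply, smul_eq_mul, Pi.single_eq_same,
        Pi.single_eq_of_ne hij, Pi.single_eq_of_ne hij.symm, mul_one, mul_zero,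
        zero_add, add_zero]
      nlinarith
    · intro k hki hkj
      simp [Pi.single_eq_of_ne hki, Pi.single_eq_of_ne hkj]
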